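/- Let X be a real vector space, c : X → [0,∞] with c(0) = 0, and f : X → ℝ convex. Then f(x) - f(y) ≤ c(x - y) for all x, y ∈ X if and only if for every ε ≥ 0 and every x ∈ X, the ε-subdifferential of f at x is contained in the ε-subdifferential of c at 0. -/

import Mathlib

open Set Pointwise

/-- Existence of an (exact) algebraic subgradient of a convex real-valued function
on a real vector space, via Hahn–Banach applied to the directional derivative. -/
private lemma exists_subgrad {X : Type*} [AddCommGroup X] [Module ℝ X]
    (f : X → ℝ) (hf : ConvexOn ℝ Set.univ f) (x : X) :
    ∃ φ : X →ₗ[ℝ] ℝ, ∀ z, φ z ≤ f (x + z) - f x := by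
  classical
  -- slope of `f` at `x` in direction `d` with step `t`
  set sl : X → ℝ → ℝ := fun d t => (f (x + t • d) - f x) / t with hsl
  set S : X → Set ℝ := fun d => sl d '' Set.Ioi 0 with hSdef
  -- convexity along lines
  have hline : ∀ d : X, ConvexOn ℝ Set.univ (fun t : ℝ => f (x + t • d)) := by
    intro d
    have h := hf.comp_affineMap (AffineMap.lineMap x (x + d))
    have hfun : (f ∘ ⇑(AffineMap.lineMap x (x + d))) = fun t : ℝ => f (x + t • d) := by
      funext t
      simp only [Function.comp_apply, AffineMap.lineMap_apply, vsub_eq_sub, vadd_eq_add,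
        add_sub_cancel_left]
      congr 1; abel
    rw [hfun] at h
    simpa using h
  have hg0 : ∀ d : X, f (x + (0:ℝ) • d) = f x := by intro d; simp
  -- monotonicity of slopes
  have hmono : ∀ d : X, ∀ s t : ℝ, 0 < s → s ≤ t → sl d s ≤ sl d t := by
    intro d s t hs hst
    have h := (hline d).secant_mono (a := 0) (x := s) (y := t) trivial trivial trivial
      (ne_of_gt hs) (ne_of_gt (hs.trans_le hst)) hst
    rw [hg0 d, sub_zero, sub_zero] at h
    simpa [hsl] using h
  -- lower bound for slopes
  have hlb : ∀ d : X, ∀ t : ℝ, 0 < t → f x - f (x - d) ≤ sl d t := by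
    intro d t ht
    have h := (hline d).secant_mono (a := 0) (x := (-1 : ℝ)) (y := t) trivial trivial trivial
      (by norm_num) (ne_of_gt ht) (by linarith)
    have h1 : f (x + (-1 : ℝ) • d) = f (x - d) := by
      congr 1
      rw [neg_smul, one_smul, ← sub_eq_add_neg]
    rw [hg0 d, h1, sub_zero, sub_zero, show ((-1:ℝ)) = -1 from rfl, div_neg, div_one,
      neg_sub] at h
    simpa [hsl] using h
  have hbdd : ∀ d : X, BddBelow (S d) := by
    intro d
    exact ⟨f x - f (x - d), by rintro r ⟨t, ht, rfl⟩; exact hlb d t ht⟩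
  have hne : ∀ d : X, (S d).Nonempty := fun d => ⟨sl d 1, 1, Set.mem_Ioi.2 one_pos, rfl⟩
  set p : X → ℝ := fun d => sInf (S d) with hpdef
  have hple : ∀ d : X, p d ≤ f (x + d) - f x := by
    intro d
    have h1 : sl d 1 = f (x + d) - f x := by simp [hsl]
    exact h1 ▸ csInf_le (hbdd d) ⟨1, Set.mem_Ioi.2 one_pos, rfl⟩
  have hp_lb : ∀ d : X, ∀ t : ℝ, 0 < t → p d ≤ sl d t := by
    intro d t ht; exact csInf_le (hbdd d) ⟨t, Set.mem_Ioi.2 ht, rfl⟩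
  -- positive homogeneity
  have hhom : ∀ a : ℝ, 0 < a → ∀ d : X, p (a • d) = a * p d := by
    intro a ha d
    have hSs : S (a • d) = a • S d := by
      ext r
      constructor
      · rintro ⟨t, ht, rfl⟩
        have ht' : 0 < t := ht
        refine ⟨sl d (t * a), ⟨t * a, Set.mem_Ioi.2 (mul_pos ht' ha), rfl⟩, ?_⟩
        simp only [hsl, smul_eq_mul, smul_smul]
        field_simp
      · rintro ⟨r', ⟨t, ht, rfl⟩, rfl⟩
        have ht' : 0 < t := ht
        refine ⟨t / a, Set.mem_Ioi.2 (div_pos ht' ha), ?_⟩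
        simp only [hsl, smul_eq_mul, smul_smul, div_mul_cancel₀ t (ne_of_gt ha)]
        rw [div_div_eq_mul_div, mul_comm, mul_div_assoc]
    show sInf (S (a • d)) = a * sInf (S d)
    rw [hSs, Real.sInf_smul_of_nonneg ha.le, smul_eq_mul]
  -- subadditivity
  have hadd : ∀ d₁ d₂ : X, p (d₁ + d₂) ≤ p d₁ + p d₂ := by
    intro d₁ d₂
    have key : ∀ t₁ t₂ : ℝ, 0 < t₁ → 0 < t₂ → p (d₁ + d₂) ≤ sl d₁ t₁ + sl d₂ t₂ := by
      intro t₁ t₂ ht₁ ht₂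
      set t := min t₁ t₂ with htdef
      have ht : 0 < t := lt_min ht₁ ht₂
      have hmid : f (x + (t/2) • (d₁ + d₂)) ≤ (f (x + t • d₁) + f (x + t • d₂)) / 2 := by
        have hcomb := hf.2 (mem_univ (x + t • d₁)) (mem_univ (x + t • d₂))
          (by norm_num : (0:ℝ) ≤ (1:ℝ)/2) (by norm_num : (0:ℝ) ≤ (1:ℝ)/2) (by norm_num)
        have heq : ((1:ℝ)/2) • (x + t • d₁) + ((1:ℝ)/2) • (x + t • d₂)
            = x + (t/2) • (d₁ + d₂) := by
          rw [show t/2 = (1:ℝ)/2 * t by ring]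
          module
        rw [heq] at hcomb
        calc f (x + (t/2) • (d₁ + d₂)) ≤ 1/2 * f (x + t • d₁) + 1/2 * f (x + t • d₂) := hcomb
          _ = (f (x + t • d₁) + f (x + t • d₂)) / 2 := by ring
      have h1 : sl (d₁ + d₂) (t/2) ≤ sl d₁ t + sl d₂ t := by
        simp only [hsl]
        rw [← add_div, div_le_div_iff₀ (by positivity) ht]
        nlinarith [hmid, ht]
      calc p (d₁ + d₂) ≤ sl (d₁ + d₂) (t/2) := hp_lb _ _ (by positivity)
        _ ≤ sl d₁ t + sl d₂ t := h1
        _ ≤ sl d₁ t₁ + sl d₂ t₂ :=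
            add_le_add (hmono d₁ t t₁ ht (min_le_left _ _)) (hmono d₂ t t₂ ht (min_le_right _ _))
    have h1 : p (d₁ + d₂) - p d₁ ≤ p d₂ := by
      apply le_csInf (hne d₂)
      rintro r₂ ⟨t₂, ht₂, rfl⟩
      have ht₂' : 0 < t₂ := ht₂
      have h2 : p (d₁ + d₂) - sl d₂ t₂ ≤ p d₁ := by
        apply le_csInf (hne d₁)
        rintro r₁ ⟨t₁, ht₁, rfl⟩
        have ht₁' : 0 < t₁ := ht₁
        linarith [key t₁ t₂ ht₁' ht₂']
      linarith
    linarith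
  have hp0 : p 0 = 0 := by
    have h1 : p 0 ≤ 0 := by simpa using hple 0
    have h2 : (0:ℝ) ≤ p 0 := by
      apply le_csInf (hne 0)
      rintro r ⟨t, ht, rfl⟩
      have ht' : 0 < t := ht
      simp [hsl, le_div_iff₀ ht']
    linarith
  -- Hahn–Banach
  obtain ⟨φ, -, hφ⟩ := exists_extension_of_le_sublinear (⊥ : X →ₗ.[ℝ] ℝ) p
    (fun a ha d => hhom a ha d) hadd
    (by
      rintro ⟨z, hz⟩
      have hz0 : z = 0 := by simpa using (show z ∈ (⊥ : Submodule ℝ X) from hz)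
      subst hz0
      have hv : (⊥ : X →ₗ.[ℝ] ℝ) ⟨0, by simp⟩ = 0 := rfl
      rw [hv, hp0])
  exact ⟨φ, fun z => (hφ z).trans (hple z)⟩

/-- a convex real-valued function `f` on a real vector space is
`1`-`c`-Lipschitz (for a nonnegative coupling cost `c` with `c 0 = 0`) iff for every
`ε ≥ 0` and every point `x`, the `ε`-subdifferential of `f` at `x` is contained in
the `ε`-subdifferential of `c` at `0`. -/
theorem stmt_1 {X : Type*} [AddCommGroup X] [Module ℝ X]
    (c : X → EReal) (hc_nonneg : ∀ x, 0 ≤ c x) (hc0 : c 0 = 0)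
    (f : X → ℝ) (hf : ConvexOn ℝ Set.univ f) :
    (∀ x y, ((f x - f y : ℝ) : EReal) ≤ c (x - y)) ↔
      ∀ ε : ℝ, 0 ≤ ε → ∀ x : X, ∀ φ : X →ₗ[ℝ] ℝ,
        (∀ y, φ (y - x) - ε ≤ f y - f x) →
        ∀ y, ((φ y - ε : ℝ) : EReal) ≤ c y := by
  constructor
  · intro h ε hε x φ hφ y
    have h1 : φ y - ε ≤ f (x + y) - f x := by
      have := hφ (x + y)
      simpa using this
    have h2 : ((f (x + y) - f x : ℝ) : EReal) ≤ c y := by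
      have := h (x + y) x
      simpa using this
    exact le_trans (by exact_mod_cast h1) h2
  · intro h x y
    obtain ⟨φ, hφ⟩ := exists_subgrad f hf x
    have hsub : ∀ y', φ (y' - x) - 0 ≤ f y' - f x := by
      intro y'
      have h2 := hφ (y' - x)
      rw [show x + (y' - x) = y' by abel] at h2
      linarith
    have hc := h 0 le_rfl x φ hsub (x - y)
    have h1 : f x - f y ≤ φ (x - y) - 0 := by
      have h2 := hφ (y - x)
      rw [show x + (y - x) = y by abel] at h2
      have hneg : φ (x - y) = - φ (y - x) := by rw [← map_neg]; congr 1; abel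
      rw [sub_zero, hneg]
      linarith
    exact le_trans (by exact_mod_cast h1) hc
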